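/- Let ξ_n > 0 and η_n > 0 be sequences and let k_n be integers with 1 ≤ k_n < n such that n^{1/2} η_n (n − k_n)^{−1/2} → 0 as n → ∞. Then sup_{θ ∈ ℝ, 0 < σ < ∞} |p_n(θ, σ) − p̃_n(θ, σ)| → 0 as n → ∞. -/

import Mathlib

open MeasureTheory ProbabilityTheory Filter Set

/-- Standard normal cdf. -/
noncomputable def Phi (x : ℝ) : ℝ :=
  ∫ t in Iic x, (Real.sqrt (2 * Real.pi))⁻¹ * Real.exp (-t ^ 2 / 2)

/-- Standard normal pdf. -/
noncomputable def stdPhi (t : ℝ) : ℝ :=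
  (Real.sqrt (2 * Real.pi))⁻¹ * Real.exp (-t ^ 2 / 2)

/-- Extension of `Phi` to the extended reals, with `PhiE ⊤ = 1` and `PhiE ⊥ = 0`. -/
noncomputable def PhiE (z : EReal) : ℝ :=
  if z = ⊤ then 1 else if z = ⊥ then 0 else Phi z.toReal

/-- Density of `m^{-1/2}` times the square root of a chi-square with `m` degrees of freedom. -/
noncomputable def rho (m : ℕ) (s : ℝ) : ℝ :=
  if 0 < s then
    (2 : ℝ) ^ ((1 : ℝ) - (m : ℝ) / 2) * (Real.Gamma ((m : ℝ) / 2))⁻¹ * Real.sqrt m *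
      ((m : ℝ) * s ^ 2) ^ (((m : ℝ) - 1) / 2) * Real.exp (-(m : ℝ) * s ^ 2 / 2)
  else 0

/-- Known-variance variable deletion probability. -/
noncomputable def pdel (n : ℕ) (ξ η θ σ : ℝ) : ℝ :=
  Phi (Real.sqrt n * (-θ / (σ * ξ) + η)) - Phi (Real.sqrt n * (-θ / (σ * ξ) - η))

/-- Unknown-variance variable deletion probability with `m` degrees of freedom. -/
noncomputable def ptdel (n m : ℕ) (ξ η θ σ : ℝ) : ℝ :=
  ∫ s in Ioi (0 : ℝ),
    (Phi (Real.sqrt n * (-θ / (σ * ξ) + s * η)) -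
      Phi (Real.sqrt n * (-θ / (σ * ξ) - s * η))) * rho m s

lemma stdPhi_integrable :
    Integrable (fun t : ℝ => (Real.sqrt (2 * Real.pi))⁻¹ * Real.exp (-t ^ 2 / 2)) := by
  have h : Integrable (fun t : ℝ => Real.exp (-(1/2 : ℝ) * t ^ 2)) :=
    integrable_exp_neg_mul_sq (by norm_num)
  have h2 : ∀ t : ℝ, Real.exp (-t ^ 2 / 2) = Real.exp (-(1/2 : ℝ) * t ^ 2) := by
    intro t; ring_nf
  simp_rw [h2]
  exact h.const_mul _

lemma Phi_lip (x y : ℝ) :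
    |Phi x - Phi y| ≤ (Real.sqrt (2 * Real.pi))⁻¹ * |x - y| := by
  have hc : (0:ℝ) ≤ (Real.sqrt (2 * Real.pi))⁻¹ := by positivity
  have hint := stdPhi_integrable
  have hPhi : Phi x - Phi y
      = ∫ t in y..x, (Real.sqrt (2 * Real.pi))⁻¹ * Real.exp (-t ^ 2 / 2) := by
    rw [Phi, Phi, intervalIntegral.integral_Iic_sub_Iic hint.integrableOn hint.integrableOn]
  rw [hPhi]
  have hb := intervalIntegral.norm_integral_le_of_norm_le_const (a := y) (b := x)
    (C := (Real.sqrt (2 * Real.pi))⁻¹)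
    (f := fun t : ℝ => (Real.sqrt (2 * Real.pi))⁻¹ * Real.exp (-t ^ 2 / 2)) ?_
  · rwa [Real.norm_eq_abs] at hb
  · intro t _
    rw [Real.norm_eq_abs, abs_mul, abs_of_nonneg hc, abs_of_nonneg (Real.exp_pos _).le]
    nth_rewrite 2 [← mul_one ((Real.sqrt (2 * Real.pi))⁻¹)]
    gcongr
    exact Real.exp_le_one_iff.mpr (by nlinarith [sq_nonneg t])

lemma Phi_continuous : Continuous Phi := by
  have : LipschitzWith ⟨(Real.sqrt (2 * Real.pi))⁻¹, by positivity⟩ Phi :=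
    LipschitzWith.of_dist_le_mul fun x y => by
      have := Phi_lip x y; rw [Real.dist_eq, Real.dist_eq]; exact this
  exact this.continuous

lemma rho_nonneg (m : ℕ) (s : ℝ) : 0 ≤ rho m s := by
  rw [rho]
  split
  · have : (0:ℝ) ≤ Real.Gamma ((m:ℝ)/2) := Real.Gamma_nonneg_of_nonneg (by positivity)
    positivity
  · exact le_rfl

lemma rho_measurable (m : ℕ) : Measurable (rho m) := by
  unfold rho
  refine Measurable.ite (measurableSet_lt measurable_const measurable_id) ?_ measurable_const
  fun_prop

noncomputable def Dm (m : ℕ) : ℝ :=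
  (2 : ℝ) ^ ((1 : ℝ) - (m : ℝ) / 2) * (Real.Gamma ((m : ℝ) / 2))⁻¹ * (m : ℝ) ^ ((m : ℝ) / 2)

lemma rho_eq (m : ℕ) (hm : 1 ≤ m) {s : ℝ} (hs : 0 < s) :
    rho m s = Dm m * s ^ ((m : ℝ) - 1) * Real.exp (-((m : ℝ) / 2) * s ^ (2 : ℝ)) := by
  have hm0 : (0:ℝ) < (m:ℝ) := by exact_mod_cast hm
  rw [rho, if_pos hs, Dm]
  have h1 : ((m : ℝ) * s ^ 2) ^ (((m : ℝ) - 1) / 2)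
      = (m : ℝ) ^ (((m : ℝ) - 1) / 2) * s ^ ((m : ℝ) - 1) := by
    rw [Real.mul_rpow hm0.le (by positivity)]
    congr 1
    rw [← Real.rpow_natCast s 2, ← Real.rpow_mul hs.le]
    congr 1
    push_cast
    ring
  have h2 : Real.sqrt (m : ℝ) * (m : ℝ) ^ (((m : ℝ) - 1) / 2) = (m : ℝ) ^ ((m : ℝ) / 2) := by
    rw [Real.sqrt_eq_rpow, ← Real.rpow_add hm0]
    ring_nf
  have h3 : Real.exp (-(m : ℝ) * s ^ 2 / 2) = Real.exp (-((m : ℝ) / 2) * s ^ (2 : ℝ)) := by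
    rw [Real.rpow_two]
    ring_nf
  rw [h1, h3]
  rw [show (2 : ℝ) ^ ((1 : ℝ) - (m : ℝ) / 2) * (Real.Gamma ((m : ℝ) / 2))⁻¹ * Real.sqrt m *
      ((m : ℝ) ^ (((m : ℝ) - 1) / 2) * s ^ ((m : ℝ) - 1))
      = (2 : ℝ) ^ ((1 : ℝ) - (m : ℝ) / 2) * (Real.Gamma ((m : ℝ) / 2))⁻¹ *
        (Real.sqrt m * (m : ℝ) ^ (((m : ℝ) - 1) / 2)) * s ^ ((m : ℝ) - 1) by ring, h2]

lemma pow_alg (x j : ℝ) (hx : 0 < x) :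
    (2:ℝ) ^ ((1:ℝ) - x/2) * x ^ (x/2) * ((x/2) ^ (-(x+j)/2) * (1/2)) = (2/x) ^ (j/2) := by
  have lhalf : (1/2 : ℝ) = Real.exp (Real.log 2 * (-1)) := by
    rw [mul_neg_one, Real.exp_neg, Real.exp_log two_pos]; norm_num
  rw [Real.rpow_def_of_pos two_pos, Real.rpow_def_of_pos hx,
    Real.rpow_def_of_pos (show (0:ℝ) < x/2 by positivity),
    Real.rpow_def_of_pos (show (0:ℝ) < 2/x by positivity),
    Real.log_div hx.ne' two_ne_zero, Real.log_div two_ne_zero hx.ne', lhalf,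
    ← Real.exp_add, ← Real.exp_add, ← Real.exp_add]
  congr 1
  ring

lemma mom_rpow (m : ℕ) (hm : 1 ≤ m) (j : ℝ) (hj : 0 ≤ j) :
    ∫ s in Ioi (0:ℝ), s ^ j * rho m s
      = (2 / (m : ℝ)) ^ (j / 2) * Real.Gamma (((m : ℝ) + j) / 2) / Real.Gamma ((m : ℝ) / 2) := by
  have hm0 : (0:ℝ) < (m:ℝ) := by exact_mod_cast hm
  have h1m : (1:ℝ) ≤ (m:ℝ) := by exact_mod_cast hm
  have hq : (-1 : ℝ) < (m : ℝ) - 1 + j := by linarith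
  have hint : ∫ s in Ioi (0:ℝ), s ^ ((m : ℝ) - 1 + j) * Real.exp (-((m : ℝ)/2) * s ^ (2:ℝ))
      = ((m : ℝ)/2) ^ (-((m : ℝ) - 1 + j + 1) / 2) * (1 / 2)
        * Real.Gamma (((m : ℝ) - 1 + j + 1) / 2) :=
    integral_rpow_mul_exp_neg_mul_rpow (by norm_num) hq (by positivity)
  have hcongr : ∫ s in Ioi (0:ℝ), s ^ j * rho m s
      = ∫ s in Ioi (0:ℝ), Dm m * (s ^ ((m : ℝ) - 1 + j) * Real.exp (-((m : ℝ)/2) * s ^ (2:ℝ))) := by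
    refine setIntegral_congr_fun measurableSet_Ioi (fun s hs => ?_)
    rw [rho_eq m hm hs, Real.rpow_add hs]
    ring
  rw [hcongr, integral_const_mul, hint]
  have e1 : ((m : ℝ) - 1 + j + 1) = (m : ℝ) + j := by ring
  rw [e1, Dm, div_eq_mul_inv, ← pow_alg (m:ℝ) j hm0]
  ring

lemma mom_integrable (m : ℕ) (hm : 1 ≤ m) (j : ℝ) (hj : 0 ≤ j) :
    IntegrableOn (fun s => s ^ j * rho m s) (Ioi (0:ℝ)) := by
  have hm0 : (0:ℝ) < (m:ℝ) := by exact_mod_cast hm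
  have h1m : (1:ℝ) ≤ (m:ℝ) := by exact_mod_cast hm
  have hq : (-1 : ℝ) < (m : ℝ) - 1 + j := by linarith
  have h := (integrableOn_rpow_mul_exp_neg_mul_rpow (s := (m : ℝ) - 1 + j) (p := 2)
    (b := (m:ℝ)/2) hq (by norm_num) (by positivity)).const_mul (Dm m)
  refine IntegrableOn.congr_fun h (fun s hs => ?_) measurableSet_Ioi
  rw [rho_eq m hm hs, Real.rpow_add hs]
  ring

section moments
variable (m : ℕ)

lemma hm0' (hm : 1 ≤ m) : (0:ℝ) < (m:ℝ)/2 := by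
  have : (0:ℝ) < (m:ℝ) := by exact_mod_cast hm
  positivity

lemma M0 (hm : 1 ≤ m) : ∫ s in Ioi (0:ℝ), rho m s = 1 := by
  have h := mom_rpow m hm 0 le_rfl
  have hG : Real.Gamma ((m:ℝ)/2) ≠ 0 := (Real.Gamma_pos_of_pos (hm0' m hm)).ne'
  simp only [Real.rpow_zero, one_mul, add_zero] at h
  norm_num at h
  rw [h, div_self hG]

lemma M2 (hm : 1 ≤ m) : ∫ s in Ioi (0:ℝ), s ^ 2 * rho m s = 1 := by
  have h := mom_rpow m hm 2 (by norm_num)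
  have hG : Real.Gamma ((m:ℝ)/2) ≠ 0 := (Real.Gamma_pos_of_pos (hm0' m hm)).ne'
  have hm0 : (m:ℝ) ≠ 0 := by
    have : (0:ℝ) < (m:ℝ) := by exact_mod_cast hm
    positivity
  rw [show ((m:ℝ) + 2)/2 = (m:ℝ)/2 + 1 by ring, Real.Gamma_add_one (hm0' m hm).ne'] at h
  rw [show (2:ℝ)/2 = 1 by norm_num, Real.rpow_one] at h
  have : ∫ s in Ioi (0:ℝ), s ^ (2:ℝ) * rho m s = ∫ s in Ioi (0:ℝ), s ^ 2 * rho m s := by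
    refine setIntegral_congr_fun measurableSet_Ioi (fun s hs => ?_)
    rw [show (2:ℝ) = ((2:ℕ):ℝ) by norm_num, Real.rpow_natCast]
  rw [← this, h]
  field_simp

lemma M4 (hm : 1 ≤ m) : ∫ s in Ioi (0:ℝ), s ^ 4 * rho m s = 1 + 2/(m:ℝ) := by
  have h := mom_rpow m hm 4 (by norm_num)
  have hG : Real.Gamma ((m:ℝ)/2) ≠ 0 := (Real.Gamma_pos_of_pos (hm0' m hm)).ne'
  have hm0 : (m:ℝ) ≠ 0 := by
    have : (0:ℝ) < (m:ℝ) := by exact_mod_cast hm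
    positivity
  rw [show ((m:ℝ) + 4)/2 = ((m:ℝ)/2 + 1) + 1 by ring, Real.Gamma_add_one (by positivity),
    Real.Gamma_add_one (hm0' m hm).ne'] at h
  rw [show (4:ℝ)/2 = (2:ℝ) by norm_num] at h
  rw [show ((2:ℝ)/(m:ℝ)) ^ (2:ℝ) = ((2:ℝ)/(m:ℝ))^(2:ℕ) by
    rw [show (2:ℝ) = ((2:ℕ):ℝ) by norm_num, Real.rpow_natCast]] at h
  have : ∫ s in Ioi (0:ℝ), s ^ (4:ℝ) * rho m s = ∫ s in Ioi (0:ℝ), s ^ 4 * rho m s := by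
    refine setIntegral_congr_fun measurableSet_Ioi (fun s hs => ?_)
    rw [show (4:ℝ) = ((4:ℕ):ℝ) by norm_num, Real.rpow_natCast]
  rw [← this, h]
  field_simp

lemma I0 (hm : 1 ≤ m) : IntegrableOn (rho m) (Ioi (0:ℝ)) := by
  have h := mom_integrable m hm 0 le_rfl
  simpa using h

lemma I1 (hm : 1 ≤ m) : IntegrableOn (fun s => s * rho m s) (Ioi (0:ℝ)) := by
  have h := mom_integrable m hm 1 (by norm_num)
  refine IntegrableOn.congr_fun h (fun s hs => ?_) measurableSet_Ioi
  rw [Real.rpow_one]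

lemma I2 (hm : 1 ≤ m) : IntegrableOn (fun s => s ^ 2 * rho m s) (Ioi (0:ℝ)) := by
  refine IntegrableOn.congr_fun (mom_integrable m hm 2 (by norm_num)) (fun s hs => ?_)
    measurableSet_Ioi
  rw [show (2:ℝ) = ((2:ℕ):ℝ) by norm_num, Real.rpow_natCast]

lemma I4 (hm : 1 ≤ m) : IntegrableOn (fun s => s ^ 4 * rho m s) (Ioi (0:ℝ)) := by
  refine IntegrableOn.congr_fun (mom_integrable m hm 4 (by norm_num)) (fun s hs => ?_)
    measurableSet_Ioi
  rw [show (4:ℝ) = ((4:ℕ):ℝ) by norm_num, Real.rpow_natCast]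

end moments

lemma algB (c h t r s : ℝ) (ht : t ≠ 0) :
    2*c*h*(t/2 + (s^2-1)^2/(2*t)) * r
      = 2*c*h*(t/2+1/(2*t)) * r + 2*c*h/(2*t) * (s^4*r) - 2*(2*c*h/(2*t)) * (s^2*r) := by
  field_simp
  ring

lemma algC (c h t : ℝ) (ht : t ≠ 0) :
    2*c*h*(t/2+1/(2*t)) * 1 + 2*c*h/(2*t) * (1+t*t) - 2*(2*c*h/(2*t)) * 1 = 2*c*h*t := by
  field_simp
  ring

lemma key (m : ℕ) (hm : 1 ≤ m) (A h : ℝ) (hh : 0 ≤ h) :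
    |(Phi (A + h) - Phi (A - h)) -
        ∫ s in Ioi (0:ℝ), (Phi (A + s * h) - Phi (A - s * h)) * rho m s|
      ≤ 2 * (Real.sqrt (2 * Real.pi))⁻¹ * h * Real.sqrt (2 / (m:ℝ)) := by
  set c : ℝ := (Real.sqrt (2 * Real.pi))⁻¹ with hc
  have hc0 : 0 ≤ c := by positivity
  have hm0 : (0:ℝ) < (m:ℝ) := by exact_mod_cast hm
  set t : ℝ := Real.sqrt (2 / (m:ℝ)) with htdef
  have ht : 0 < t := Real.sqrt_pos.mpr (by positivity)
  have ht2 : t * t = 2 / (m:ℝ) := Real.mul_self_sqrt (by positivity)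
  set K : ℝ := Phi (A + h) - Phi (A - h) with hK
  set f : ℝ → ℝ := fun s => Phi (A + s * h) - Phi (A - s * h) with hf
  -- pointwise bound
  have hpt : ∀ s : ℝ, 0 < s →
      |K - f s| ≤ 2 * c * h * (t / 2 + (s ^ 2 - 1) ^ 2 / (2 * t)) := by
    intro s hs
    have h1 : |K - f s| ≤ |Phi (A + h) - Phi (A + s * h)| + |Phi (A - s * h) - Phi (A - h)| := by
      have : K - f s = (Phi (A + h) - Phi (A + s * h)) + (Phi (A - s * h) - Phi (A - h)) := by
        rw [hK, hf]; ring
      rw [this]; exact abs_add_le _ _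
    have h2 : |Phi (A + h) - Phi (A + s * h)| ≤ c * (h * |s - 1|) := by
      have := Phi_lip (A + h) (A + s * h)
      calc |Phi (A + h) - Phi (A + s * h)| ≤ c * |A + h - (A + s * h)| := this
        _ = c * (h * |s - 1|) := by
            rw [show A + h - (A + s * h) = h * (1 - s) by ring, abs_mul, abs_of_nonneg hh,
              abs_sub_comm]
    have h3 : |Phi (A - s * h) - Phi (A - h)| ≤ c * (h * |s - 1|) := by
      have := Phi_lip (A - s * h) (A - h)
      calc |Phi (A - s * h) - Phi (A - h)| ≤ c * |A - s * h - (A - h)| := this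
        _ = c * (h * |s - 1|) := by
            rw [show A - s * h - (A - h) = h * (1 - s) by ring, abs_mul, abs_of_nonneg hh,
              abs_sub_comm]
    have h4 : |s - 1| ≤ |s ^ 2 - 1| := by
      rw [show s ^ 2 - 1 = (s - 1) * (s + 1) by ring, abs_mul]
      nth_rewrite 1 [← mul_one |s - 1|]
      gcongr
      rw [abs_of_pos (by linarith : (0:ℝ) < s + 1)]
      linarith
    have h5 : |s ^ 2 - 1| ≤ t / 2 + (s ^ 2 - 1) ^ 2 / (2 * t) := by
      rw [div_add_div _ _ (two_ne_zero) (by positivity), le_div_iff₀ (by positivity)]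
      nlinarith [sq_nonneg (|s ^ 2 - 1| - t), sq_abs (s ^ 2 - 1), abs_nonneg (s ^ 2 - 1)]
    calc |K - f s| ≤ c * (h * |s - 1|) + c * (h * |s - 1|) := le_trans h1 (add_le_add h2 h3)
      _ = 2 * c * h * |s - 1| := by ring
      _ ≤ 2 * c * h * (t / 2 + (s ^ 2 - 1) ^ 2 / (2 * t)) :=
          mul_le_mul_of_nonneg_left (h4.trans h5) (by positivity)
  -- integrability of f * rho
  have hmeas : AEStronglyMeasurable (fun s => f s * rho m s) (volume.restrict (Ioi (0:ℝ))) := by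
    refine (Measurable.mul ?_ (rho_measurable m)).aestronglyMeasurable
    exact ((Phi_continuous.comp (by continuity)).sub (Phi_continuous.comp (by continuity))).measurable
  have hfint : IntegrableOn (fun s => f s * rho m s) (Ioi (0:ℝ)) := by
    refine Integrable.mono ((I1 m hm).const_mul (2 * c * h)) hmeas ?_
    filter_upwards [ae_restrict_mem measurableSet_Ioi] with s hs
    have hs' : (0:ℝ) < s := hs
    rw [Real.norm_eq_abs, Real.norm_eq_abs, abs_mul, abs_of_nonneg (rho_nonneg m s)]
    have h2 : |f s| ≤ 2 * c * h * s := by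
      have := Phi_lip (A + s * h) (A - s * h)
      calc |f s| ≤ c * |A + s * h - (A - s * h)| := this
        _ = 2 * c * h * s := by
            rw [show A + s * h - (A - s * h) = (2 * h * s) by ring, abs_of_nonneg (by positivity)]
            ring
    calc |f s| * rho m s ≤ (2 * c * h * s) * rho m s := by
          gcongr
          exact rho_nonneg m s
      _ = 2 * c * h * (s * rho m s) := by ring
      _ ≤ |2 * c * h * (s * rho m s)| := le_abs_self _
  -- rewrite K - integral as single integral
  have hKrho : IntegrableOn (fun s => K * rho m s) (Ioi (0:ℝ)) := (I0 m hm).const_mul K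
  have hKconst : K = ∫ s in Ioi (0:ℝ), K * rho m s := by
    rw [integral_const_mul, M0 m hm, mul_one]
  have hsplit : K - (∫ s in Ioi (0:ℝ), f s * rho m s)
      = ∫ s in Ioi (0:ℝ), (K - f s) * rho m s := by
    nth_rewrite 1 [hKconst]
    rw [← integral_sub hKrho hfint]
    congr 1
    funext s
    ring
  rw [hsplit]
  -- bound integral
  set B : ℝ → ℝ := fun s => 2 * c * h * (t / 2 + (s ^ 2 - 1) ^ 2 / (2 * t)) * rho m s with hB
  have hIB : IntegrableOn B (Ioi (0:ℝ)) := by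
    have := (((I0 m hm).const_mul (2 * c * h * (t / 2 + 1 / (2 * t)))).add
        ((I4 m hm).const_mul (2 * c * h / (2 * t)))).sub
        ((I2 m hm).const_mul (2 * (2 * c * h / (2 * t))))
    refine this.congr (ae_of_all _ (fun s => ?_))
    exact (algB c h t (rho m s) s ht.ne').symm
  have hintB : ∫ s in Ioi (0:ℝ), B s = 2 * c * h * t := by
    have e : ∀ s : ℝ, B s = (2 * c * h * (t / 2 + 1 / (2 * t))) * rho m s
        + (2 * c * h / (2 * t)) * (s ^ 4 * rho m s)
        - (2 * (2 * c * h / (2 * t))) * (s ^ 2 * rho m s) := by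
      intro s
      exact algB c h t (rho m s) s ht.ne'
    rw [integral_congr_ae (ae_of_all _ e)]
    have hI0' : IntegrableOn (fun s : ℝ => (2 * c * h * (t / 2 + 1 / (2 * t))) * rho m s)
        (Ioi (0:ℝ)) := (I0 m hm).const_mul _
    have hI4' : IntegrableOn (fun s : ℝ => (2 * c * h / (2 * t)) * (s ^ 4 * rho m s))
        (Ioi (0:ℝ)) := (I4 m hm).const_mul _
    have hI2' : IntegrableOn (fun s : ℝ => (2 * (2 * c * h / (2 * t))) * (s ^ 2 * rho m s))
        (Ioi (0:ℝ)) := (I2 m hm).const_mul _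
    have hadd : IntegrableOn (fun s : ℝ => (2 * c * h * (t / 2 + 1 / (2 * t))) * rho m s
        + (2 * c * h / (2 * t)) * (s ^ 4 * rho m s)) (Ioi (0:ℝ)) := hI0'.add hI4'
    rw [integral_sub hadd hI2', integral_add hI0' hI4',
      integral_const_mul, integral_const_mul, integral_const_mul, M0 m hm, M2 m hm, M4 m hm]
    rw [ht2.symm]
    exact algC c h t ht.ne'
  calc |∫ s in Ioi (0:ℝ), (K - f s) * rho m s|
      ≤ ∫ s in Ioi (0:ℝ), |K - f s| * |rho m s| := by
        simpa [Real.norm_eq_abs] using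
          norm_integral_le_integral_norm (μ := volume.restrict (Ioi (0:ℝ)))
            (fun s => (K - f s) * rho m s)
    _ ≤ ∫ s in Ioi (0:ℝ), B s := by
        refine integral_mono_of_nonneg (ae_of_all _ (fun s => mul_nonneg (abs_nonneg _) (abs_nonneg _))) hIB ?_
        filter_upwards [ae_restrict_mem measurableSet_Ioi] with s hs
        have hs' : (0:ℝ) < s := hs
        rw [abs_of_nonneg (rho_nonneg m s)]
        show |K - f s| * rho m s ≤ 2 * c * h * (t / 2 + (s ^ 2 - 1) ^ 2 / (2 * t)) * rho m s
        exact mul_le_mul_of_nonneg_right (hpt s hs') (rho_nonneg m s)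
    _ = 2 * c * h * t := hintB

/-- uniform closeness of the known- and unknown-variance deletion
probabilities when `n^{1/2} η_n (n - k_n)^{-1/2} → 0`. -/
theorem stmt_7 (ξ η : ℕ → ℝ) (hξ : ∀ n, 0 < ξ n) (hη : ∀ n, 0 < η n)
    (k : ℕ → ℕ) (hk : ∀ n, 2 ≤ n → 1 ≤ k n ∧ k n < n)
    (hr : Tendsto (fun n : ℕ => Real.sqrt n * η n / Real.sqrt ((n - k n : ℕ) : ℝ))
      atTop (nhds 0)) :
    ∀ ε > (0 : ℝ), ∀ᶠ n in atTop, ∀ θ σ : ℝ, 0 < σ →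
      |pdel n (ξ n) (η n) θ σ - ptdel n (n - k n) (ξ n) (η n) θ σ| < ε := by
  intro ε hε
  set c : ℝ := (Real.sqrt (2 * Real.pi))⁻¹ with hc
  have hc0 : 0 ≤ c := by positivity
  set C : ℝ := 2 * c * Real.sqrt 2 with hC
  have hC0 : 0 ≤ C := by positivity
  have hδ : 0 < ε / (C + 1) := by positivity
  have hev1 : ∀ᶠ (n : ℕ) in atTop,
      dist (Real.sqrt n * η n / Real.sqrt ((n - k n : ℕ) : ℝ)) 0 < ε / (C + 1) :=
    Metric.tendsto_nhds.mp hr _ hδ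
  filter_upwards [hev1, eventually_ge_atTop 2] with n hn1 hn2
  intro θ σ hσ
  have hm : 1 ≤ n - k n := Nat.sub_pos_of_lt (hk n hn2).2
  set m : ℕ := n - k n with hmdef
  have hmpos : (0:ℝ) < Real.sqrt ((m : ℕ) : ℝ) := by
    have : (0:ℝ) < (m:ℝ) := by exact_mod_cast hm
    exact Real.sqrt_pos.mpr this
  set A : ℝ := Real.sqrt n * (-θ / (σ * ξ n)) with hA
  set h : ℝ := Real.sqrt n * η n with hh
  have hh0 : 0 ≤ h := mul_nonneg (Real.sqrt_nonneg _) (hη n).le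
  have e1 : pdel n (ξ n) (η n) θ σ = Phi (A + h) - Phi (A - h) := by
    rw [pdel]
    congr 2 <;> ring
  have e2 : ptdel n m (ξ n) (η n) θ σ
      = ∫ s in Ioi (0:ℝ), (Phi (A + s * h) - Phi (A - s * h)) * rho m s := by
    rw [ptdel]
    refine setIntegral_congr_fun measurableSet_Ioi (fun s _ => ?_)
    congr 2 <;> rw [hA, hh] <;> ring_nf
  rw [e1, e2]
  have hkey := key m hm A h hh0
  have hsqrt : Real.sqrt (2 / (m:ℝ)) = Real.sqrt 2 / Real.sqrt (m:ℝ) :=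
    Real.sqrt_div (by norm_num) _
  have hbound : 2 * c * h * Real.sqrt (2 / (m:ℝ)) = C * (h / Real.sqrt (m:ℝ)) := by
    rw [hsqrt, hC]
    field_simp
  rw [hbound] at hkey
  have hrn : |h / Real.sqrt ((m : ℕ) : ℝ)| < ε / (C + 1) := by
    rw [Real.dist_eq, sub_zero] at hn1
    exact hn1
  have hrn0 : 0 ≤ h / Real.sqrt ((m : ℕ) : ℝ) := div_nonneg hh0 hmpos.le
  calc |(Phi (A + h) - Phi (A - h)) -
        ∫ s in Ioi (0:ℝ), (Phi (A + s * h) - Phi (A - s * h)) * rho m s|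
      ≤ C * (h / Real.sqrt (m:ℝ)) := hkey
    _ < ε := by
        have h0 : h / Real.sqrt (m:ℝ) < ε / (C + 1) := by
          rwa [abs_of_nonneg hrn0] at hrn
        have h1 : C * (h / Real.sqrt (m:ℝ)) ≤ C * (ε / (C + 1)) :=
          mul_le_mul_of_nonneg_left h0.le hC0
        have h2 : C * (ε / (C + 1)) < ε := by
          rw [mul_comm, div_mul_eq_mul_div, div_lt_iff₀ (by positivity)]
          nlinarith
        linarith
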